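/- Let D₁, D₂ ⊆ ℝⁿ be nonempty compact convex sets with D₁ ⊆ int D₂, let h₁ < h₂ be reals, T₁ = {(x, h₁) : x ∈ D₁}, T₂ = {(x, h₂) : x ∈ D₂}, F = conv(T₁ ∪ T₂) the top-heavy frustum, and P : ℝⁿ × ℝ → ℝⁿ the projection P(x, y) = x. If h₁ ≤ c₁ < c₂ ≤ h₂, then P(sect_{c₁} F) ⊆ int(P(sect_{c₂} F)). -/

import Mathlib

open Pointwise


/-- projections of lower sections of a top-heavy frustum lie in the interior of projections of higher sections. -/
theorem statement_10 (n : ℕ) (hn : 1 ≤ n)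
    (D₁ D₂ : Set (EuclideanSpace ℝ (Fin n)))
    (hD₁ne : D₁.Nonempty) (hD₂ne : D₂.Nonempty)
    (hD₁cpt : IsCompact D₁) (hD₁conv : Convex ℝ D₁)
    (hD₂cpt : IsCompact D₂) (hD₂conv : Convex ℝ D₂)
    (htop : D₁ ⊆ interior D₂)
    (h₁ h₂ : ℝ) (hh : h₁ < h₂)
    (T₁ T₂ F : Set (EuclideanSpace ℝ (Fin n) × ℝ))
    (hT₁ : T₁ = (fun x => (x, h₁)) '' D₁)
    (hT₂ : T₂ = (fun x => (x, h₂)) '' D₂)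
    (hF : F = convexHull ℝ (T₁ ∪ T₂))
    (c₁ c₂ : ℝ) (hc₁ : h₁ ≤ c₁) (hc₁₂ : c₁ < c₂) (hc₂ : c₂ ≤ h₂) :
    Prod.fst '' (F ∩ {z : EuclideanSpace ℝ (Fin n) × ℝ | z.2 = c₁}) ⊆
      interior (Prod.fst '' (F ∩ {z : EuclideanSpace ℝ (Fin n) × ℝ | z.2 = c₂})) := by
  have hd : (0:ℝ) < h₂ - h₁ := sub_pos.mpr hh
  set t₁ : ℝ := (c₁ - h₁) / (h₂ - h₁) with ht₁def
  set t₂ : ℝ := (c₂ - h₁) / (h₂ - h₁) with ht₂def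
  have ht₁0 : 0 ≤ t₁ := div_nonneg (by linarith) hd.le
  have ht₂1 : t₂ ≤ 1 := (div_le_one hd).mpr (by linarith)
  have htlt : t₁ < t₂ := (div_lt_div_iff_of_pos_right hd).mpr (by linarith)
  have ht₂0 : 0 ≤ t₂ := ht₁0.trans htlt.le
  have ht₁1 : t₁ ≤ 1 := htlt.le.trans ht₂1
  -- T₁, T₂ are convex
  have hT₁eq : T₁ = D₁ ×ˢ ({h₁} : Set ℝ) := by
    rw [hT₁]; ext ⟨x, y⟩; simp [eq_comm, and_comm]
  have hT₂eq : T₂ = D₂ ×ˢ ({h₂} : Set ℝ) := by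
    rw [hT₂]; ext ⟨x, y⟩; simp [eq_comm, and_comm]
  have hT₁conv : Convex ℝ T₁ := hT₁eq ▸ hD₁conv.prod (convex_singleton h₁)
  have hT₂conv : Convex ℝ T₂ := hT₂eq ▸ hD₂conv.prod (convex_singleton h₂)
  have hT₁ne : T₁.Nonempty := by rw [hT₁]; exact hD₁ne.image _
  have hT₂ne : T₂.Nonempty := by rw [hT₂]; exact hD₂ne.image _
  have hFjoin : F = convexJoin ℝ T₁ T₂ := by
    rw [hF, convexHull_union hT₁ne hT₂ne, hT₁conv.convexHull_eq, hT₂conv.convexHull_eq]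
  -- forward: section of F at level c projects into (1-t)•D₁ + t•D₂
  have hforward : ∀ c : ℝ, ∀ z : EuclideanSpace ℝ (Fin n) × ℝ, z ∈ F → z.2 = c →
      z.1 ∈ (1 - (c - h₁) / (h₂ - h₁)) • D₁ + ((c - h₁) / (h₂ - h₁)) • D₂ := by
    intro c z hz hz2
    rw [hFjoin, mem_convexJoin] at hz
    obtain ⟨p, hp, q, hq, hseg⟩ := hz
    obtain ⟨a, b, ha, hb, hab, habz⟩ := hseg
    rw [hT₁] at hp; rw [hT₂] at hq
    obtain ⟨p', hp', rfl⟩ := hp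
    obtain ⟨q', hq', rfl⟩ := hq
    have hz2' : a * h₁ + b * h₂ = c := by
      have := congrArg Prod.snd habz
      simpa [hz2] using this
    have hb' : b = (c - h₁) / (h₂ - h₁) := by
      field_simp
      linear_combination hz2' - h₁ * hab
    have ha' : a = 1 - (c - h₁) / (h₂ - h₁) := by rw [← hb']; linarith
    have hz1 : a • p' + b • q' = z.1 := by
      have := congrArg Prod.fst habz
      simpa using this
    exact ⟨a • p', ha' ▸ Set.smul_mem_smul_set hp', b • q',
      hb' ▸ Set.smul_mem_smul_set hq', hz1⟩
  -- backward: (1-t₂)•D₁ + t₂•D₂ at level c₂ lies in F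
  have hbackward : ∀ x, x ∈ (1 - t₂) • D₁ + t₂ • D₂ →
      (x, c₂) ∈ F ∩ {z : EuclideanSpace ℝ (Fin n) × ℝ | z.2 = c₂} := by
    intro x hx
    obtain ⟨u, hu, v, hv, rfl⟩ := hx
    obtain ⟨p, hp, rfl⟩ := hu
    obtain ⟨q, hq, rfl⟩ := hv
    refine ⟨?_, rfl⟩
    rw [hFjoin, mem_convexJoin]
    refine ⟨(p, h₁), hT₁ ▸ ⟨p, hp, rfl⟩, (q, h₂), hT₂ ▸ ⟨q, hq, rfl⟩,
      1 - t₂, t₂, by linarith, ht₂0, by ring, ?_⟩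
    have : (1 - t₂) * h₁ + t₂ * h₂ = c₂ := by
      rw [ht₂def]; field_simp; ring
    simp [Prod.ext_iff, Prod.smul_mk, this]
  -- the open set U
  have hintne : (interior D₂).Nonempty := hD₁ne.mono htop
  set U : Set (EuclideanSpace ℝ (Fin n)) :=
    ((1 - t₂) • D₁ + t₁ • D₂) + (t₂ - t₁) • interior D₂ with hUdef
  have hUopen : IsOpen U :=
    IsOpen.add_left (isOpen_interior.smul₀ (ne_of_gt (sub_pos.mpr htlt)))
  -- U ⊆ (1-t₂)•D₁ + t₂•D₂
  have hUsub : U ⊆ (1 - t₂) • D₁ + t₂ • D₂ := by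
    intro w hw
    obtain ⟨u, hu, v, hv, rfl⟩ := hw
    obtain ⟨u₁, hu₁, u₂, hu₂, rfl⟩ := hu
    obtain ⟨r, hr, rfl⟩ := hv
    have ht₂split : t₂ • D₂ = t₁ • D₂ + (t₂ - t₁) • D₂ := by
      have := hD₂conv.add_smul ht₁0 (sub_nonneg.mpr htlt.le)
      simpa using this
    refine ⟨u₁, hu₁, u₂ + (t₂ - t₁) • r, ?_, by exact (add_assoc _ _ _).symm⟩
    rw [ht₂split]
    exact ⟨u₂, hu₂, (t₂ - t₁) • r, Set.smul_mem_smul_set (interior_subset hr), rfl⟩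
  -- section at c₁ projects into U
  intro x hx
  obtain ⟨z, ⟨hzF, hz2⟩, rfl⟩ := hx
  have hx₁ : z.1 ∈ (1 - t₁) • D₁ + t₁ • D₂ := hforward c₁ z hzF hz2
  have hxU : z.1 ∈ U := by
    obtain ⟨u, hu, v, hv, huv⟩ := hx₁
    obtain ⟨p, hp, rfl⟩ := hu
    refine ⟨(1 - t₂) • p + v, ⟨(1 - t₂) • p, Set.smul_mem_smul_set hp, v, hv, rfl⟩,
      (t₂ - t₁) • p, Set.smul_mem_smul_set (htop hp), ?_⟩
    rw [← huv]
    module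
  have : U ⊆ interior (Prod.fst '' (F ∩ {z : EuclideanSpace ℝ (Fin n) × ℝ | z.2 = c₂})) := by
    rw [← hUopen.interior_eq]
    apply interior_mono
    intro w hw
    exact ⟨(w, c₂), hbackward w (hUsub hw), rfl⟩
  exact this hxU
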